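/- The ground-truth matrix Ā is a global minimizer over A ∈ ℝ^{n×m} of the loss g(A) = Σ_{t=0}^{T−1} ‖(Ā − A) f(x_t) + d̄_t‖₂ if and only if there exist vectors g_t ∈ ℝⁿ for t ∈ K^c with ‖g_t‖₂ ≤ 1 for every t ∈ K^c, such that Σ_{t∈K^c} f(x_t) g_tᵀ + Σ_{t∈K} f(x_t) d̂_tᵀ = 0_{m×n}. -/

import Mathlib

open Matrix
open scoped BigOperators Classical

/-- Euclidean norm of a vector in `ℝ^k`. -/
noncomputable def e2norm {k : ℕ} (v : Fin k → ℝ) : ℝ := Real.sqrt (∑ i, (v i) ^ 2)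

/-- Normalized attack direction `d̂ = d / ‖d‖₂`. -/
noncomputable def dhat {k : ℕ} (v : Fin k → ℝ) : Fin k → ℝ := (e2norm v)⁻¹ • v

noncomputable def toE {k : ℕ} (v : Fin k → ℝ) : EuclideanSpace ℝ (Fin k) := (WithLp.equiv 2 _).symm v

lemma e2norm_eq {k : ℕ} (v : Fin k → ℝ) : e2norm v = ‖toE v‖ := by
  rw [EuclideanSpace.norm_eq]
  simp [e2norm, toE]

lemma dot_eq_inner {k : ℕ} (u v : Fin k → ℝ) : u ⬝ᵥ v = inner ℝ (toE u) (toE v) := by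
  simp [toE, PiLp.inner_apply, dotProduct, RCLike.inner_apply]
  exact Finset.sum_congr rfl fun i _ => mul_comm _ _

lemma toE_add {k} (u v : Fin k → ℝ) : toE (u+v) = toE u + toE v := rfl
lemma toE_smul {k} (a : ℝ) (v : Fin k → ℝ) : toE (a • v) = a • toE v := rfl
lemma toE_zero {k} : toE (0 : Fin k → ℝ) = 0 := rfl
lemma toE_eq_zero {k} {v : Fin k → ℝ} : toE v = 0 ↔ v = 0 := by
  constructor <;> intro h <;> simpa [toE] using h

-- key inequality upper
lemma key_upper {E : Type*} [NormedAddCommGroup E] [InnerProductSpace ℝ E] (d w : E) (hd : d ≠ 0) :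
    ‖w + d‖ ≤ ‖d‖ + (inner ℝ d w : ℝ)/‖d‖ + ‖w‖^2/(2*‖d‖) := by
  have ha : 0 < ‖d‖ := norm_pos_iff.2 hd
  have hs : 0 ≤ ‖w + d‖ := norm_nonneg _
  have h2 : ‖w + d‖^2 = ‖w‖^2 + 2*(inner ℝ w d : ℝ) + ‖d‖^2 := norm_add_sq_real w d
  rw [← real_inner_comm w d] at h2
  rw [show ‖d‖ + (inner ℝ d w : ℝ)/‖d‖ + ‖w‖^2/(2*‖d‖)
      = (2*‖d‖^2 + 2*(inner ℝ d w : ℝ) + ‖w‖^2)/(2*‖d‖) by field_simp,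
    le_div_iff₀ (by positivity)]
  nlinarith [sq_nonneg (‖d‖ - ‖w + d‖)]

lemma key_lower {E : Type*} [NormedAddCommGroup E] [InnerProductSpace ℝ E] (d w : E) (hd : d ≠ 0) :
    ‖d‖ + (inner ℝ d w : ℝ)/‖d‖ ≤ ‖w + d‖ := by
  have ha : 0 < ‖d‖ := norm_pos_iff.2 hd
  have h1 : (inner ℝ d (w + d) : ℝ) ≤ ‖d‖ * ‖w + d‖ := real_inner_le_norm d (w+d)
  have h2 : (inner ℝ d (w+d) : ℝ) = inner ℝ d w + ‖d‖^2 := by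
    rw [inner_add_right, real_inner_self_eq_norm_sq]
  rw [show ‖d‖ + (inner ℝ d w : ℝ)/‖d‖ = (‖d‖^2 + (inner ℝ d w : ℝ))/‖d‖ by field_simp,
    div_le_iff₀ ha]
  nlinarith

lemma e2norm_nonneg {k} (v : Fin k → ℝ) : 0 ≤ e2norm v := by rw [e2norm_eq]; exact norm_nonneg _
lemma e2norm_zero {k} : e2norm (0 : Fin k → ℝ) = 0 := by simp [e2norm_eq, toE_zero]
lemma e2norm_smul {k} (a : ℝ) (ha : 0 ≤ a) (v : Fin k → ℝ) :
    e2norm (a • v) = a * e2norm v := by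
  rw [e2norm_eq, e2norm_eq, toE_smul, norm_smul, Real.norm_eq_abs, abs_of_nonneg ha]

lemma dhat_dot {k} (d w : Fin k → ℝ) :
    dhat d ⬝ᵥ w = (inner ℝ (toE d) (toE w) : ℝ) / ‖toE d‖ := by
  rw [dhat, smul_dotProduct, dot_eq_inner, ← e2norm_eq, smul_eq_mul,
    div_eq_inv_mul]

lemma dot_vecMulVec {n m : ℕ} (v : Fin m → ℝ) (g : Fin n → ℝ) (B : Matrix (Fin n) (Fin m) ℝ) :
    g ⬝ᵥ B.mulVec v = ∑ j, ∑ i, vecMulVec v g j i * B i j := by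
  simp only [dotProduct, mulVec, vecMulVec_apply, Finset.mul_sum, dotProduct]
  rw [Finset.sum_comm]
  exact Finset.sum_congr rfl fun j _ => Finset.sum_congr rfl fun i _ => by ring

lemma pairing_sum {ι : Type*} {n m : ℕ} (s : Finset ι) (M : ι → Matrix (Fin m) (Fin n) ℝ)
    (B : Matrix (Fin n) (Fin m) ℝ) :
    ∑ j, ∑ i, (∑ t ∈ s, M t) j i * B i j = ∑ t ∈ s, ∑ j, ∑ i, M t j i * B i j := by
  simp only [Finset.sum_apply, Matrix.sum_apply, Finset.sum_mul]
  have h1 : ∀ j : Fin m, ∑ i, ∑ t ∈ s, M t j i * B i j = ∑ t ∈ s, ∑ i, M t j i * B i j :=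
    fun j => Finset.sum_comm
  simp_rw [h1]
  exact Finset.sum_comm

open Finset in
lemma stepA {T n m : ℕ} (f : ℕ → Fin m → ℝ) (d : ℕ → Fin n → ℝ)
    (hmin : ∀ C : Matrix (Fin n) (Fin m) ℝ,
      ∑ t ∈ range T, e2norm (d t) ≤ ∑ t ∈ range T, e2norm (C.mulVec (f t) + d t))
    (B : Matrix (Fin n) (Fin m) ℝ) :
    0 ≤ (∑ t ∈ (range T).filter (fun t => d t = 0), e2norm (B.mulVec (f t)))
      + ∑ t ∈ (range T).filter (fun t => ¬ d t = 0), dhat (d t) ⬝ᵥ B.mulVec (f t) := by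
  set Kc := (range T).filter (fun t => d t = 0) with hKc
  set K := (range T).filter (fun t => ¬ d t = 0) with hK
  set S1 : ℝ := ∑ t ∈ Kc, e2norm (B.mulVec (f t)) with hS1
  set S2 : ℝ := ∑ t ∈ K, dhat (d t) ⬝ᵥ B.mulVec (f t) with hS2
  set S3 : ℝ := ∑ t ∈ K, (e2norm (B.mulVec (f t)))^2 / (2 * e2norm (d t)) with hS3
  have hS3nn : 0 ≤ S3 := by
    refine Finset.sum_nonneg fun t ht => ?_
    have hd : d t ≠ 0 := (Finset.mem_filter.1 ht).2
    have : 0 < e2norm (d t) := by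
      rw [e2norm_eq]; exact norm_pos_iff.2 (fun h => hd (toE_eq_zero.1 h))
    positivity
  have key : ∀ ε : ℝ, 0 < ε → 0 ≤ S1 + S2 + ε * S3 := by
    intro ε hε
    have h := hmin (ε • B)
    rw [← Finset.sum_filter_add_sum_filter_not (range T) (fun t => d t = 0),
        ← Finset.sum_filter_add_sum_filter_not (range T) (fun t => d t = 0)
          (fun t => e2norm ((ε • B).mulVec (f t) + d t))] at h
    have hLKc : ∑ t ∈ Kc, e2norm (d t) = 0 := by
      refine Finset.sum_eq_zero fun t ht => ?_
      rw [(Finset.mem_filter.1 ht).2, e2norm_zero]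
    have hRKc : ∑ t ∈ Kc, e2norm ((ε • B).mulVec (f t) + d t) = ε * S1 := by
      rw [hS1, Finset.mul_sum]
      refine Finset.sum_congr rfl fun t ht => ?_
      rw [(Finset.mem_filter.1 ht).2, add_zero, Matrix.smul_mulVec,
        e2norm_smul ε (le_of_lt hε)]
    have hRK : ∑ t ∈ K, e2norm ((ε • B).mulVec (f t) + d t)
        ≤ (∑ t ∈ K, e2norm (d t)) + ε * S2 + ε^2 * S3 := by
      rw [hS2, hS3, Finset.mul_sum, Finset.mul_sum, ← Finset.sum_add_distrib,
        ← Finset.sum_add_distrib]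
      refine Finset.sum_le_sum fun t ht => ?_
      have hd : d t ≠ 0 := (Finset.mem_filter.1 ht).2
      have hdE : toE (d t) ≠ 0 := fun h => hd (toE_eq_zero.1 h)
      have := key_upper (toE (d t)) (ε • toE (B.mulVec (f t))) hdE
      rw [real_inner_smul_right, norm_smul, Real.norm_eq_abs, abs_of_nonneg hε.le,
        ← toE_smul, ← toE_add] at this
      simp only [← e2norm_eq] at this
      rw [Matrix.smul_mulVec]
      refine this.trans (le_of_eq ?_)
      rw [dhat_dot, e2norm_eq (d t)]
      ring
    have h2 := le_trans h (add_le_add (le_of_eq hRKc) hRK)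
    rw [hLKc, zero_add] at h2
    nlinarith
  by_contra hneg
  push_neg at hneg
  have hε : 0 < -(S1 + S2) / (S3 + 1) := by
    apply div_pos (by linarith) (by linarith)
  have := key _ hε
  rw [div_mul_eq_mul_div, ← sub_nonneg] at this
  have h2 : -(S1+S2) * S3 / (S3+1) < -(S1+S2) := by
    rw [div_lt_iff₀ (by linarith)]
    nlinarith
  nlinarith [this]

noncomputable def toEM {n m : ℕ} (M : Matrix (Fin m) (Fin n) ℝ) :
    EuclideanSpace ℝ (Fin m × Fin n) :=
  (WithLp.equiv 2 _).symm (fun p => M p.1 p.2)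

noncomputable def toEML (n m : ℕ) :
    Matrix (Fin m) (Fin n) ℝ →ₗ[ℝ] EuclideanSpace ℝ (Fin m × Fin n) where
  toFun := toEM
  map_add' M N := rfl
  map_smul' a M := rfl

lemma toEM_inj {n m : ℕ} {M N : Matrix (Fin m) (Fin n) ℝ} (h : toEM M = toEM N) : M = N := by
  ext j i
  exact congrFun (congrArg (WithLp.equiv 2 _) h) (j, i)

open Finset in
lemma stepB {n m : ℕ} {ι : Type*} [DecidableEq ι] (Kc : Finset ι) (F : ι → Fin m → ℝ)
    (M : Matrix (Fin m) (Fin n) ℝ)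
    (hphi : ∀ B : Matrix (Fin n) (Fin m) ℝ,
      0 ≤ (∑ t ∈ Kc, e2norm (B.mulVec (F t))) + ∑ j, ∑ i, M j i * B i j) :
    ∃ g : ι → Fin n → ℝ, (∀ t ∈ Kc, e2norm (g t) ≤ 1) ∧
      (∑ t ∈ Kc, vecMulVec (F t) (g t)) + M = 0 := by
  classical
  set V := EuclideanSpace ℝ (Fin n)
  set Lmap : ((t : {t // t ∈ Kc}) → V) →ₗ[ℝ] EuclideanSpace ℝ (Fin m × Fin n) :=
    { toFun := fun g => toEM (∑ t ∈ Kc.attach, vecMulVec (F t) ((WithLp.equiv 2 _) (g t)))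
      map_add' := by
        intro g g'
        have h : (∑ t ∈ Kc.attach, vecMulVec (F t) ((WithLp.equiv 2 (Fin n → ℝ)) ((g + g') t)))
            = (∑ t ∈ Kc.attach, vecMulVec (F t) ((WithLp.equiv 2 _) (g t)))
              + (∑ t ∈ Kc.attach, vecMulVec (F t) ((WithLp.equiv 2 _) (g' t))) := by
          rw [← Finset.sum_add_distrib]
          refine Finset.sum_congr rfl fun t _ => ?_
          ext j i
          simp only [vecMulVec_apply, Matrix.add_apply, Pi.add_apply, WithLp.equiv_apply]
          exact mul_add _ _ _
        show toEM _ = _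
        rw [h]
        rfl
      map_smul' := by
        intro a g
        have h : (∑ t ∈ Kc.attach, vecMulVec (F t) ((WithLp.equiv 2 (Fin n → ℝ)) ((a • g) t)))
            = a • (∑ t ∈ Kc.attach, vecMulVec (F t) ((WithLp.equiv 2 _) (g t))) := by
          rw [Finset.smul_sum]
          refine Finset.sum_congr rfl fun t _ => ?_
          ext j i
          simp only [vecMulVec_apply, Matrix.smul_apply, Pi.smul_apply, WithLp.equiv_apply,
            PiLp.smul_apply, smul_eq_mul]
          rw [show ((a • g t) i : ℝ) = a * g t i from rfl]
          ring
        show toEM _ = _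
        rw [h]
        rfl } with hLmap
  set S : Set ((t : {t // t ∈ Kc}) → V) := Set.pi Set.univ (fun _ => Metric.closedBall 0 1)
    with hS
  have hSconv : Convex ℝ S := convex_pi (fun _ _ => convex_closedBall 0 1)
  have hScpt : IsCompact S := isCompact_univ_pi (fun _ => isCompact_closedBall 0 1)
  have hCconv : Convex ℝ (Lmap '' S) := hSconv.linear_image Lmap
  have hCcl : IsClosed (Lmap '' S) :=
    (hScpt.image Lmap.continuous_of_finiteDimensional).isClosed
  have hmem : toEM (-M) ∈ Lmap '' S := by
    by_contra hnot
    obtain ⟨φ, u, hC, hp⟩ := geometric_hahn_banach_closed_point hCconv hCcl hnot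
    set B : Matrix (Fin n) (Fin m) ℝ :=
      Matrix.of (fun i j => φ (toEM (Matrix.single j i (1:ℝ)))) with hB
    set ψ : Matrix (Fin m) (Fin n) ℝ →ₗ[ℝ] ℝ := φ.toLinearMap.comp (toEML n m) with hψdef
    have hψ : ∀ Y, φ (toEM Y) = ψ Y := fun _ => rfl
    have hrep : ∀ X : Matrix (Fin m) (Fin n) ℝ,
        φ (toEM X) = ∑ j, ∑ i, X j i * B i j := by
      intro X
      rw [hψ]
      have h0 := congrArg ψ (matrix_eq_sum_single X)
      rw [h0, map_sum]
      refine Finset.sum_congr rfl fun j _ => ?_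
      rw [map_sum]
      refine Finset.sum_congr rfl fun i _ => ?_
      rw [show Matrix.single j i (X j i) = X j i • Matrix.single j i (1:ℝ) by
          rw [smul_single, smul_eq_mul, mul_one],
        _root_.map_smul, smul_eq_mul]
      rfl
    have himg : ∀ g : (t : {t // t ∈ Kc}) → V,
        φ (Lmap g) = ∑ t ∈ Kc.attach, ((WithLp.equiv 2 _) (g t)) ⬝ᵥ B.mulVec (F t) := by
      intro g
      have h0 : φ (Lmap g)
          = φ (toEM (∑ t ∈ Kc.attach, vecMulVec (F t) ((WithLp.equiv 2 _) (g t)))) := rfl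
      rw [h0, hrep, pairing_sum]
      exact Finset.sum_congr rfl fun t _ => (dot_vecMulVec _ _ _).symm
    set g0 : (t : {t // t ∈ Kc}) → V := fun t =>
      if h : B.mulVec (F t) = 0 then 0
      else toE ((e2norm (B.mulVec (F t)))⁻¹ • B.mulVec (F t)) with hg0
    have hg0S : g0 ∈ S := by
      intro t _
      simp only [hg0, Metric.mem_closedBall, dist_zero_right]
      split
      · simp
      · rename_i h
        have hpos : 0 < e2norm (B.mulVec (F t)) := by
          rw [e2norm_eq]
          exact norm_pos_iff.2 (fun hh => h (toE_eq_zero.1 hh))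
        rw [← e2norm_eq, e2norm_smul _ (by positivity), inv_mul_cancel₀ (ne_of_gt hpos)]
    have hdot : ∀ t : {t // t ∈ Kc},
        ((WithLp.equiv 2 (Fin n → ℝ)) (g0 t)) ⬝ᵥ B.mulVec (F t) = e2norm (B.mulVec (F t)) := by
      intro t
      simp only [hg0]
      split
      · rename_i h
        rw [h, e2norm_zero]
        simp [dotProduct]
      · rename_i h
        have hpos : 0 < e2norm (B.mulVec (F t)) := by
          rw [e2norm_eq]
          exact norm_pos_iff.2 (fun hh => h (toE_eq_zero.1 hh))
        have h2 : (WithLp.equiv 2 (Fin n → ℝ))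
            (toE ((e2norm (B.mulVec (F ↑t)))⁻¹ • B.mulVec (F ↑t)))
            = (e2norm (B.mulVec (F ↑t)))⁻¹ • B.mulVec (F ↑t) := rfl
        rw [h2, smul_dotProduct, smul_eq_mul, dot_eq_inner,
          real_inner_self_eq_norm_sq, ← e2norm_eq]
        field_simp
    have h1 : ∑ t ∈ Kc.attach, e2norm (B.mulVec (F t)) < u := by
      have hc := hC (Lmap g0) (Set.mem_image_of_mem _ hg0S)
      rw [himg] at hc
      simpa only [hdot] using hc
    have h2 : u < -∑ j, ∑ i, M j i * B i j := by
      have hpp := hp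
      rw [show toEM (-M) = -toEM M from rfl, map_neg, hrep] at hpp
      linarith
    have h3 := hphi B
    rw [← Finset.sum_attach Kc (fun t => e2norm (B.mulVec (F t)))] at h3
    linarith
  obtain ⟨g0, hg0S, hg0L⟩ := hmem
  have hsum : (∑ t ∈ Kc.attach, vecMulVec (F t) ((WithLp.equiv 2 (Fin n → ℝ)) (g0 t))) = -M :=
    toEM_inj hg0L
  set gg : ι → Fin n → ℝ :=
    fun t => if h : t ∈ Kc then (WithLp.equiv 2 _) (g0 ⟨t, h⟩) else 0 with hgg
  have hggt : ∀ t : {t // t ∈ Kc}, gg ↑t = (WithLp.equiv 2 (Fin n → ℝ)) (g0 t) := by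
    intro t
    rw [hgg]
    exact dif_pos t.2
  refine ⟨gg, ?_, ?_⟩
  · intro t ht
    have h1 : gg t = (WithLp.equiv 2 (Fin n → ℝ)) (g0 ⟨t, ht⟩) := hggt ⟨t, ht⟩
    rw [h1, e2norm_eq]
    have h2 := hg0S (⟨t, ht⟩ : {t // t ∈ Kc}) (Set.mem_univ _)
    simp only [Metric.mem_closedBall, dist_zero_right] at h2
    exact h2
  · rw [← Finset.sum_attach Kc (fun t => vecMulVec (F t) (gg t))]
    rw [show (∑ t ∈ Kc.attach, vecMulVec (F ↑t) (gg ↑t))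
        = ∑ t ∈ Kc.attach, vecMulVec (F ↑t) ((WithLp.equiv 2 (Fin n → ℝ)) (g0 t)) from
      Finset.sum_congr rfl fun t _ => by rw [hggt t]]
    rw [hsum]
    simp

lemma dot_le_e2norm {k : ℕ} (g w : Fin k → ℝ) (hg : e2norm g ≤ 1) : g ⬝ᵥ w ≤ e2norm w := by
  rw [dot_eq_inner, e2norm_eq]
  calc (inner ℝ (toE g) (toE w) : ℝ) ≤ ‖toE g‖ * ‖toE w‖ := real_inner_le_norm _ _
    _ ≤ 1 * ‖toE w‖ := by
        apply mul_le_mul_of_nonneg_right _ (norm_nonneg _)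
        rwa [← e2norm_eq]
    _ = ‖toE w‖ := one_mul _


/-- subgradient optimality characterization.
`Ā` is a global minimizer of `g(A) = Σ_{t<T} ‖(Ā − A) f(x_t) + d̄_t‖₂` iff there exist
vectors `g_t ∈ ℝⁿ` for `t ∈ K^c` with `‖g_t‖₂ ≤ 1` such that
`Σ_{t∈K^c} f(x_t) g_tᵀ + Σ_{t∈K} f(x_t) d̂_tᵀ = 0_{m×n}`. -/
theorem groundTruth_isGlobalMin_iff_subgradient
    (T n m : ℕ) (hT : 0 < T) (hn : 0 < n) (hm : 0 < m)
    (f : (Fin n → ℝ) → (Fin m → ℝ))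
    (Abar : Matrix (Fin n) (Fin m) ℝ)
    (d : ℕ → (Fin n → ℝ)) (x : ℕ → (Fin n → ℝ))
    (hx0 : x 0 = 0)
    (hxstep : ∀ t < T, x (t + 1) = Abar.mulVec (f (x t)) + d t) :
    (∀ A : Matrix (Fin n) (Fin m) ℝ,
        ∑ t ∈ Finset.range T, e2norm ((Abar - Abar).mulVec (f (x t)) + d t) ≤
          ∑ t ∈ Finset.range T, e2norm ((Abar - A).mulVec (f (x t)) + d t))
      ↔
    (∃ gvec : ℕ → (Fin n → ℝ),
        (∀ t ∈ (Finset.range T).filter (fun t => d t = 0), e2norm (gvec t) ≤ 1) ∧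
        (∑ t ∈ (Finset.range T).filter (fun t => d t = 0),
              Matrix.vecMulVec (f (x t)) (gvec t))
          + (∑ t ∈ (Finset.range T).filter (fun t => d t ≠ 0),
              Matrix.vecMulVec (f (x t)) (dhat (d t))) = 0) := by
  classical
  have hL : ∀ t : ℕ, (Abar - Abar).mulVec (f (x t)) + d t = d t := fun t => by
    rw [sub_self, Matrix.zero_mulVec, zero_add]
  have hKK : (Finset.range T).filter (fun t => d t ≠ 0)
      = (Finset.range T).filter (fun t => ¬ d t = 0) := by
    apply Finset.filter_congr
    intro t _
    simp [Ne]
  constructor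
  · intro hmin
    have hmin' : ∀ C : Matrix (Fin n) (Fin m) ℝ,
        ∑ t ∈ Finset.range T, e2norm (d t) ≤ ∑ t ∈ Finset.range T, e2norm (C.mulVec (f (x t)) + d t) := by
      intro C
      have h := hmin (Abar - C)
      simp only [hL, sub_sub_cancel] at h
      exact h
    set M : Matrix (Fin m) (Fin n) ℝ :=
      ∑ t ∈ (Finset.range T).filter (fun t => d t ≠ 0), vecMulVec (f (x t)) (dhat (d t)) with hM
    have hphi : ∀ B : Matrix (Fin n) (Fin m) ℝ,
        0 ≤ (∑ t ∈ (Finset.range T).filter (fun t => d t = 0), e2norm (B.mulVec (f (x t))))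
          + ∑ j, ∑ i, M j i * B i j := by
      intro B
      have hA := stepA (fun t => f (x t)) d hmin' B
      have hpair : ∑ t ∈ (Finset.range T).filter (fun t => ¬ d t = 0),
          dhat (d t) ⬝ᵥ B.mulVec (f (x t)) = ∑ j, ∑ i, M j i * B i j := by
        rw [hM, hKK, pairing_sum]
        exact Finset.sum_congr rfl fun t _ => dot_vecMulVec _ _ _
      rw [hpair] at hA
      exact hA
    obtain ⟨g, hg1, hg2⟩ := stepB ((Finset.range T).filter (fun t => d t = 0)) (fun t => f (x t)) M hphi
    exact ⟨g, hg1, hg2⟩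
  · rintro ⟨g, hg1, hg2⟩ A
    simp only [hL]
    rw [← Finset.sum_filter_add_sum_filter_not (Finset.range T) (fun t => d t = 0)
          (fun t => e2norm (d t)),
        ← Finset.sum_filter_add_sum_filter_not (Finset.range T) (fun t => d t = 0)
          (fun t => e2norm ((Abar - A).mulVec (f (x t)) + d t))]
    set B := Abar - A with hBdef
    set Kc := (Finset.range T).filter (fun t => d t = 0) with hKc
    set K := (Finset.range T).filter (fun t => ¬ d t = 0) with hK2
    have h1 : ∑ t ∈ Kc, e2norm (d t) = 0 :=
      Finset.sum_eq_zero fun t ht => by rw [(Finset.mem_filter.1 ht).2, e2norm_zero]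
    have hKcle : ∑ t ∈ Kc, (g t) ⬝ᵥ B.mulVec (f (x t))
        ≤ ∑ t ∈ Kc, e2norm (B.mulVec (f (x t)) + d t) := by
      refine Finset.sum_le_sum fun t ht => ?_
      rw [(Finset.mem_filter.1 ht).2, add_zero]
      exact dot_le_e2norm _ _ (hg1 t ht)
    have hKle : ∑ t ∈ K, (e2norm (d t) + dhat (d t) ⬝ᵥ B.mulVec (f (x t)))
        ≤ ∑ t ∈ K, e2norm (B.mulVec (f (x t)) + d t) := by
      refine Finset.sum_le_sum fun t ht => ?_
      have hd : d t ≠ 0 := (Finset.mem_filter.1 ht).2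
      have hdE : toE (d t) ≠ 0 := fun h => hd (toE_eq_zero.1 h)
      have := key_lower (toE (d t)) (toE (B.mulVec (f (x t)))) hdE
      rw [← toE_add] at this
      rw [dhat_dot, e2norm_eq (d t), e2norm_eq (B.mulVec (f (x t)) + d t)]
      exact this
    have hzero : (∑ t ∈ Kc, (g t) ⬝ᵥ B.mulVec (f (x t)))
        + ∑ t ∈ K, dhat (d t) ⬝ᵥ B.mulVec (f (x t)) = 0 := by
      have e1 : ∑ t ∈ Kc, (g t) ⬝ᵥ B.mulVec (f (x t))
          = ∑ j, ∑ i, (∑ t ∈ Kc, vecMulVec (f (x t)) (g t)) j i * B i j := by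
        rw [pairing_sum]
        exact Finset.sum_congr rfl fun t _ => dot_vecMulVec _ _ _
      have e2 : ∑ t ∈ K, dhat (d t) ⬝ᵥ B.mulVec (f (x t))
          = ∑ j, ∑ i, (∑ t ∈ K, vecMulVec (f (x t)) (dhat (d t))) j i * B i j := by
        rw [pairing_sum]
        exact Finset.sum_congr rfl fun t _ => dot_vecMulVec _ _ _
      rw [e1, e2, ← Finset.sum_add_distrib]
      have e3 : ∀ j : Fin m, (∑ i, (∑ t ∈ Kc, vecMulVec (f (x t)) (g t)) j i * B i j)
          + ∑ i, (∑ t ∈ K, vecMulVec (f (x t)) (dhat (d t))) j i * B i j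
          = ∑ i, ((∑ t ∈ Kc, vecMulVec (f (x t)) (g t))
              + ∑ t ∈ K, vecMulVec (f (x t)) (dhat (d t))) j i * B i j := by
        intro j
        rw [← Finset.sum_add_distrib]
        exact Finset.sum_congr rfl fun i _ => by
          rw [Matrix.add_apply, add_mul]
      simp only [e3]
      rw [← hKK] at hg2
      rw [hg2]
      simp
    have hsplit : ∑ t ∈ K, (e2norm (d t) + dhat (d t) ⬝ᵥ B.mulVec (f (x t)))
        = (∑ t ∈ K, e2norm (d t)) + ∑ t ∈ K, dhat (d t) ⬝ᵥ B.mulVec (f (x t)) :=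
      Finset.sum_add_distrib
    rw [hsplit] at hKle
    linarith
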